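/- arXiv:2512.11809 — 2 statements merged into one kernel-verified Lean document; each statement's English description precedes it below -/
import Mathlib

section
/- Let X be an Archimedean vector lattice equipped with a convergence θ (satisfying axioms (1)–(4)) and let Y be a vector sublattice of X. Then Y is θ-closed in X if and only if Y is uθ-closed in X. -/
open Filter

/-- A convergence structure `θ` on a vector lattice `X`, assigning to nets (maps from
nonempty directed preordered index types) limit points, and satisfying axioms (1)–(4):
(1) constant nets converge; (2) linearity, and `t • x →θ 0` as the scalar net `t → 0`;
(3) domination: if `x_α →θ 0` and `|y_α| ≤ |x_α|` then `y_α →θ 0`;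
(4) every subnet of a `θ`-convergent net `θ`-converges to the same limit. -/
structure VLConvergence (X : Type*) [Lattice X] [AddCommGroup X] [Module ℝ X] where
  conv : ∀ {ι : Type} [Preorder ι] [IsDirected ι (· ≤ ·)] [Nonempty ι], (ι → X) → X → Prop
  conv_const : ∀ {ι : Type} [Preorder ι] [IsDirected ι (· ≤ ·)] [Nonempty ι] (x : X),
    conv (fun _ : ι => x) x
  conv_add_smul : ∀ {ι : Type} [Preorder ι] [IsDirected ι (· ≤ ·)] [Nonempty ι]
    (f g : ι → X) (x y : X) (l : ℝ),
    conv f x → conv g y → conv (fun α => f α + l • g α) (x + l • y)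
  conv_smul_zero : ∀ {ι : Type} [Preorder ι] [IsDirected ι (· ≤ ·)] [Nonempty ι]
    (t : ι → ℝ) (x : X), Filter.Tendsto t Filter.atTop (nhds (0 : ℝ)) →
    conv (fun α => t α • x) (0 : X)
  conv_dominated : ∀ {ι : Type} [Preorder ι] [IsDirected ι (· ≤ ·)] [Nonempty ι]
    (f g : ι → X), conv f 0 → (∀ α, |g α| ≤ |f α|) → conv g 0
  conv_subnet : ∀ {ι κ : Type} [Preorder ι] [IsDirected ι (· ≤ ·)] [Nonempty ι]
    [Preorder κ] [IsDirected κ (· ≤ ·)] [Nonempty κ]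
    (f : ι → X) (x : X) (φ : κ → ι), conv f x →
    (∀ α₀ : ι, ∃ β₀ : κ, ∀ β, β₀ ≤ β → α₀ ≤ φ β) → conv (fun β => f (φ β)) x

/-- The Archimedean property for a vector lattice. -/
def IsArchimedeanVL (X : Type*) [Lattice X] [AddCommGroup X] : Prop :=
  ∀ x y : X, 0 ≤ x → (∀ n : ℕ, n • x ≤ y) → x = 0

variable {X : Type*} [Lattice X] [AddCommGroup X]
  [CovariantClass X X (· + ·) (· ≤ ·)] [Module ℝ X] [PosSMulMono ℝ X]

/-- The unbounded modification `uθ` of a convergence `θ`: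
`x_α →uθ x` iff `(x_α ⊔ b) ⊓ c →θ (x ⊔ b) ⊓ c` for all `b ≤ c`. -/
def VLConvergence.uconv (θ : VLConvergence X)
    {ι : Type} [Preorder ι] [IsDirected ι (· ≤ ·)] [Nonempty ι]
    (f : ι → X) (x : X) : Prop :=
  ∀ b c : X, b ≤ c → θ.conv (fun α => (f α ⊔ b) ⊓ c) ((x ⊔ b) ⊓ c)

/-- `Y` is `θ`-closed: every `θ`-limit of a net with values in `Y` belongs to `Y`. -/
def VLConvergence.IsClosedSet (θ : VLConvergence X) (Y : Set X) : Prop :=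
  ∀ (ι : Type) [Preorder ι] [IsDirected ι (· ≤ ·)] [Nonempty ι] (f : ι → X) (x : X),
    (∀ α, f α ∈ Y) → θ.conv f x → x ∈ Y

/-- `Y` is `uθ`-closed: every `uθ`-limit of a net with values in `Y` belongs to `Y`. -/
def VLConvergence.IsUClosedSet (θ : VLConvergence X) (Y : Set X) : Prop :=
  ∀ (ι : Type) [Preorder ι] [IsDirected ι (· ≤ ·)] [Nonempty ι] (f : ι → X) (x : X),
    (∀ α, f α ∈ Y) → θ.uconv f x → x ∈ Y

section Aux

variable {θ : VLConvergence X} {ι : Type} [Preorder ι] [IsDirected ι (· ≤ ·)] [Nonempty ι]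

private lemma conv_congr' {f g : ι → X} {x : X} (he : ∀ α, f α = g α)
    (h : θ.conv f x) : θ.conv g x := by
  have hfg : f = g := funext he
  exact hfg ▸ h

private lemma conv_neg' {f : ι → X} {x : X} (h : θ.conv f x) :
    θ.conv (fun α => -f α) (-x) := by
  have := θ.conv_add_smul (fun _ => 0) f 0 x (-1) (θ.conv_const 0) h
  simpa using this

private lemma conv_sub_const' {f : ι → X} {x : X} (h : θ.conv f x) :
    θ.conv (fun α => f α - x) 0 := by
  have := θ.conv_add_smul f (fun _ => x) x x (-1) h (θ.conv_const x)
  simpa [sub_eq_add_neg] using this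

private lemma conv_add_const' {f : ι → X} {z : X} (h : θ.conv f 0) :
    θ.conv (fun α => f α + z) z := by
  have := θ.conv_add_smul f (fun _ => z) 0 z 1 h (θ.conv_const z)
  simpa using this

/-- Domination principle relative to arbitrary limits. -/
private lemma conv_of_dom {f : ι → X} {x : X} (g : ι → X) (y : X) (h : θ.conv f x)
    (hd : ∀ α, |g α - y| ≤ |f α - x|) : θ.conv g y := by
  have h0 := conv_sub_const' h
  have h1 : θ.conv (fun α => g α - y) 0 := θ.conv_dominated _ _ h0 (by simpa using hd)
  have h2 := conv_add_const' (z := y) h1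
  exact conv_congr' (fun α => by abel) h2

/-- θ-convergence is preserved by the truncations. -/
private lemma conv_trunc {f : ι → X} {x : X} (h : θ.conv f x) (b c : X) :
    θ.conv (fun α => (f α ⊔ b) ⊓ c) ((x ⊔ b) ⊓ c) := by
  refine conv_of_dom _ _ h (fun α => ?_)
  calc |(f α ⊔ b) ⊓ c - (x ⊔ b) ⊓ c| ≤ |f α ⊔ b - (x ⊔ b)| := abs_inf_sub_inf_le_abs _ _ _
    _ ≤ |f α - x| := abs_sup_sub_sup_le_abs _ _ _

/-- θ-convergence implies uθ-convergence. -/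
private lemma uconv_of_conv {f : ι → X} {x : X} (h : θ.conv f x) : θ.uconv f x :=
  fun b c _ => conv_trunc h b c

private lemma trunc_sup_eq (a w c : X) : (a ⊔ w) ⊓ c = (a ⊔ w ⊓ c) ⊓ c := by
  letI : DistribLattice X := AddCommGroup.toDistribLattice X
  rw [inf_sup_right, inf_sup_right, inf_assoc, inf_idem]

private lemma uconv_sup_const {f : ι → X} {x : X} (h : θ.uconv f x) (z : X) :
    θ.uconv (fun α => f α ⊔ z) (x ⊔ z) := by
  intro b c hbc
  have h1 := h ((z ⊔ b) ⊓ c) c inf_le_right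
  have he : ∀ a : X, (a ⊔ (z ⊔ b) ⊓ c) ⊓ c = ((a ⊔ z) ⊔ b) ⊓ c := by
    intro a
    rw [← trunc_sup_eq, sup_assoc]
  have h2 := conv_congr' (fun α => he (f α)) h1
  rwa [he x] at h2

private lemma uconv_neg {f : ι → X} {x : X} (h : θ.uconv f x) :
    θ.uconv (fun α => -f α) (-x) := by
  intro b c hbc
  have h1 := h (-c) (-b) (neg_le_neg_iff.2 hbc)
  have h2 := conv_neg' h1
  have he : ∀ a : X, -((a ⊔ -c) ⊓ -b) = (-a ⊔ b) ⊓ c := by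
    intro a
    letI : DistribLattice X := AddCommGroup.toDistribLattice X
    rw [neg_inf, neg_sup, neg_neg, neg_neg, sup_inf_right, sup_eq_left.2 hbc]
  have h3 := conv_congr' (fun α => he (f α)) h2
  rwa [he x] at h3

end Aux

theorem stmt14 (hArch : IsArchimedeanVL X) (θ : VLConvergence X)
    (Y : Submodule ℝ X) (hYlat : ∀ a b : X, a ∈ Y → b ∈ Y → a ⊔ b ∈ Y) :
    θ.IsClosedSet (Y : Set X) ↔ θ.IsUClosedSet (Y : Set X) := by
  have hYinf : ∀ a b : X, a ∈ Y → b ∈ Y → a ⊓ b ∈ Y := by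
    intro a b ha hb
    have : a ⊓ b = a + b - (a ⊔ b) := by
      rw [eq_sub_iff_add_eq, inf_add_sup]
    rw [this]
    exact Y.sub_mem (Y.add_mem ha hb) (hYlat a b ha hb)
  constructor
  · -- θ-closed → uθ-closed
    intro hY ι _ _ _ f x hf hux
    -- positive-element case
    have key : ∀ (z : X), 0 ≤ z → ∀ g : ι → X, (∀ α, g α ∈ (Y : Set X)) →
        (∀ α, 0 ≤ g α) → θ.uconv g z → z ∈ (Y : Set X) := by
      intro z hz g hgY hgpos hg
      have step1 : ∀ α, g α ⊓ z ∈ (Y : Set X) := by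
        intro α
        have hc0 : (0 : X) ≤ g α ⊔ z := le_trans hz le_sup_right
        have h := hg 0 (g α ⊔ z) hc0
        have hlim : (z ⊔ 0) ⊓ (g α ⊔ z) = z := by
          rw [sup_eq_left.2 hz, inf_eq_left.2 le_sup_right]
        rw [hlim] at h
        -- h : conv (fun β => (g β ⊔ 0) ⊓ (g α ⊔ z)) z
        have h2 : θ.conv (fun β => g α ⊓ ((g β ⊔ 0) ⊓ (g α ⊔ z))) (g α ⊓ z) :=
          conv_of_dom _ _ h (fun β => by
            have := abs_inf_sub_inf_le_abs ((g β ⊔ 0) ⊓ (g α ⊔ z)) z (g α)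
            simpa [inf_comm] using this)
        have h3 : θ.conv (fun β => g α ⊓ g β) (g α ⊓ z) := by
          refine conv_congr' (fun β => ?_) h2
          rw [sup_eq_left.2 (hgpos β), inf_comm (g β) (g α ⊔ z), ← inf_assoc,
            inf_eq_left.2 (le_sup_left : g α ≤ g α ⊔ z)]
        exact hY ι (fun β => g α ⊓ g β) (g α ⊓ z)
          (fun β => hYinf _ _ (hgY α) (hgY β)) h3
      have h := hg 0 z hz
      have hlim : (z ⊔ 0) ⊓ z = z := by rw [sup_eq_left.2 hz, inf_idem]
      rw [hlim] at h
      have h4 : θ.conv (fun α => g α ⊓ z) z := by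
        refine conv_congr' (fun α => ?_) h
        rw [sup_eq_left.2 (hgpos α)]
      exact hY ι (fun α => g α ⊓ z) z step1 h4
    have hpos : x ⊔ 0 ∈ (Y : Set X) := by
      refine key (x ⊔ 0) le_sup_right (fun α => f α ⊔ 0)
        (fun α => hYlat _ _ (hf α) Y.zero_mem) (fun α => le_sup_right) ?_
      exact uconv_sup_const hux 0
    have hneg : (-x) ⊔ 0 ∈ (Y : Set X) := by
      refine key ((-x) ⊔ 0) le_sup_right (fun α => (-f α) ⊔ 0)
        (fun α => hYlat _ _ (Y.neg_mem (hf α)) Y.zero_mem) (fun α => le_sup_right) ?_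
      exact uconv_sup_const (uconv_neg hux) 0
    have hx : x = (x ⊔ 0) - ((-x) ⊔ 0) := by
      rw [eq_sub_iff_add_eq, add_sup]
      simp [sup_comm]
    rw [hx]
    exact Y.sub_mem hpos hneg
  · -- uθ-closed → θ-closed
    intro hY ι _ _ _ f x hf hconv
    exact hY ι f x hf (uconv_of_conv hconv)
end

section
/- Let X be a Riesz space (vector lattice over ℝ), let x, e ∈ X with x ≥ 0 and e ≥ 0, and let n be a positive integer. Then n·((x − n·e)⁺ ∧ e) ≤ x. -/
section aux

variable {X : Type*} [Lattice X] [AddCommGroup X]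
    [CovariantClass X X (· + ·) (· ≤ ·)]

-- Riesz decomposition type inequality: for positive a, b, c:
-- a ⊓ (b + c) ≤ a ⊓ b + a ⊓ c
lemma aux_inf_add_le (a b c : X) (ha : 0 ≤ a) (hb : 0 ≤ b) (hc : 0 ≤ c) :
    a ⊓ (b + c) ≤ a ⊓ b + a ⊓ c := by
  have hab : (0 : X) ≤ a ⊓ b := le_inf ha hb
  have h1 : a ⊓ (b + c) ≤ (a + c) ⊓ (b + c) :=
    le_inf (inf_le_left.trans (le_add_of_nonneg_right hc)) inf_le_right
  have h2 : (a + c) ⊓ (b + c) = a ⊓ b + c := by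
    rw [add_comm a c, add_comm b c, ← add_inf, add_comm]
  have h3 : a ⊓ (b + c) ≤ a ⊓ (a ⊓ b + c) := by
    refine le_inf inf_le_left ?_
    rw [← h2]; exact h1
  have h4 : a ⊓ (a ⊓ b + c) ≤ (a ⊓ b + a) ⊓ (a ⊓ b + c) := by
    refine le_inf (le_trans inf_le_left (le_add_of_nonneg_left hab)) ?_
    exact inf_le_right
  calc a ⊓ (b + c) ≤ (a ⊓ b + a) ⊓ (a ⊓ b + c) := le_trans h3 h4
    _ = a ⊓ b + a ⊓ c := by rw [← add_inf]

lemma aux_inf_nsmul (a b : X) (ha : 0 ≤ a) (hb : 0 ≤ b) (h : a ⊓ b = 0) (n : ℕ) :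
    a ⊓ (n • b) = 0 := by
  induction n with
  | zero => simpa using le_antisymm inf_le_right (le_inf ha le_rfl)
  | succ k ih =>
    have h1 : a ⊓ ((k • b) + b) ≤ a ⊓ (k • b) + a ⊓ b :=
      aux_inf_add_le a (k • b) b ha (nsmul_nonneg hb k) hb
    rw [ih, h, add_zero] at h1
    exact le_antisymm (by simpa [succ_nsmul] using h1)
      (le_inf ha (nsmul_nonneg hb (k + 1)))

end aux

theorem stmt18 {X : Type*} [Lattice X] [AddCommGroup X]
    [CovariantClass X X (· + ·) (· ≤ ·)]
    (x e : X) (hx : 0 ≤ x) (he : 0 ≤ e) (n : ℕ) (hn : 0 < n) :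
    n • (((x - n • e) ⊔ 0) ⊓ e) ≤ x := by
  set u := ((x - n • e) ⊔ 0) ⊓ e with hu
  have hu0 : 0 ≤ u := le_inf le_sup_right he
  have hue : u ≤ e := inf_le_right
  set t := x - n • u with ht
  -- u ≤ t⁺
  have h1 : u ≤ t⁺ := by
    have : x - n • e ≤ t := by
      simp only [ht]
      exact sub_le_sub_left (nsmul_le_nsmul_right hue n) x
    calc u ≤ (x - n • e) ⊔ 0 := inf_le_left
      _ ≤ t ⊔ 0 := sup_le_sup_right this 0
      _ = t⁺ := (posPart_def t).symm
  -- t⁻ ≤ n • t⁺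
  have h2 : t⁻ ≤ n • t⁺ := by
    have hnu : n • u ≤ n • t⁺ := nsmul_le_nsmul_right h1 n
    have hxt : -t ≤ n • t⁺ := by
      have : -t = n • u - x := by rw [ht]; abel
      rw [this]
      exact (sub_le_sub hnu hx).trans (by simp)
    rw [negPart_def]
    exact sup_le hxt (nsmul_nonneg (posPart_nonneg t) n)
  have hdisj : t⁺ ⊓ t⁻ = 0 := posPart_inf_negPart_eq_zero t
  have h3 : t⁻ ⊓ (n • t⁺) = 0 :=
    aux_inf_nsmul t⁻ t⁺ (negPart_nonneg t) (posPart_nonneg t)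
      (by rw [inf_comm]; exact hdisj) n
  have h4 : t⁻ = 0 := by
    have := le_inf (le_refl t⁻) h2
    rw [h3] at this
    exact le_antisymm this (negPart_nonneg t)
  have h5 : 0 ≤ t := by
    have := posPart_sub_negPart t
    rw [h4, sub_zero] at this
    rw [← this]; exact posPart_nonneg t
  simpa [ht, sub_nonneg] using h5
end
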